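/- arXiv:1603.04132 — 3 statements merged into one kernel-verified Lean document; each statement's English description precedes it below -/
import Mathlib

section
/- Let n_j = (a_j, b_j, c_j) ∈ ℝ³ for j = 1, 2, 3, 4 be vectors such that every 3-element subset of {n1, n2, n3, n4} is linearly independent, and let x1, x2, x3 ∈ ℝ be pairwise distinct and z1, z2, z3 ∈ ℝ arbitrary. Define the 6×9 real matrix 𝒜 whose rows are: row 1 = (a1, b1, c1, a1·x1, b1·x1, c1·x1, a1·z1, b1·z1, c1·z1); row 2 = (a2, b2, c2, a2·x2, b2·x2, c2·x2, a2·z2, b2·z2, c2·z2); row 3 = (a3, b3, c3, a3·x1, b3·x1, c3·x1, a3·z1, b3·z1, c3·z1); row 4 = (a3, b3, c3, a3·x3, b3·x3, c3·x3, a3·z3, b3·z3, c3·z3); row 5 = (a4, b4, c4, a4·x2, b4·x2, c4·x2, a4·z2, b4·z2, c4·z2); row 6 = (a4, b4, c4, a4·x3, b4·x3, c4·x3, a4·z3, b4·z3, c4·z3). Then the six rows of 𝒜 are linearly independent, i.e., the rank of 𝒜 equals 6. -/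
/-- The six point-to-plane linear constraints of a single observation are linearly
independent: the 6×9 coefficient matrix 𝒜 has linearly independent rows, i.e. rank 6. -/
theorem stmt_4 (a1 b1 c1 a2 b2 c2 a3 b3 c3 a4 b4 c4 : ℝ) (x1 x2 x3 z1 z2 z3 : ℝ)
    (h123 : LinearIndependent ℝ ![![a1, b1, c1], ![a2, b2, c2], ![a3, b3, c3]])
    (h124 : LinearIndependent ℝ ![![a1, b1, c1], ![a2, b2, c2], ![a4, b4, c4]])
    (h134 : LinearIndependent ℝ ![![a1, b1, c1], ![a3, b3, c3], ![a4, b4, c4]])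
    (h234 : LinearIndependent ℝ ![![a2, b2, c2], ![a3, b3, c3], ![a4, b4, c4]])
    (hx12 : x1 ≠ x2) (hx13 : x1 ≠ x3) (hx23 : x2 ≠ x3) :
    let 𝒜 : Matrix (Fin 6) (Fin 9) ℝ :=
      !![a1, b1, c1, a1*x1, b1*x1, c1*x1, a1*z1, b1*z1, c1*z1;
         a2, b2, c2, a2*x2, b2*x2, c2*x2, a2*z2, b2*z2, c2*z2;
         a3, b3, c3, a3*x1, b3*x1, c3*x1, a3*z1, b3*z1, c3*z1;
         a3, b3, c3, a3*x3, b3*x3, c3*x3, a3*z3, b3*z3, c3*z3;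
         a4, b4, c4, a4*x2, b4*x2, c4*x2, a4*z2, b4*z2, c4*z2;
         a4, b4, c4, a4*x3, b4*x3, c4*x3, a4*z3, b4*z3, c4*z3]
    LinearIndependent ℝ (fun i => 𝒜 i) ∧ 𝒜.rank = 6 := by
  intro 𝒜
  have hLI : LinearIndependent ℝ (fun i => 𝒜 i) := by
    rw [Fintype.linearIndependent_iff]
    intro g hg i
    have key : ∀ k : Fin 9,
        g 0 * 𝒜 0 k + g 1 * 𝒜 1 k + g 2 * 𝒜 2 k + g 3 * 𝒜 3 k + g 4 * 𝒜 4 k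
          + g 5 * 𝒜 5 k = 0 := by
      intro k
      have h := congrFun hg k
      simpa only [Finset.sum_apply, Pi.smul_apply, smul_eq_mul, Fin.sum_univ_six,
        Pi.zero_apply] using h
    have e0 : g 0 * a1 + g 1 * a2 + g 2 * a3 + g 3 * a3 + g 4 * a4 + g 5 * a4 = 0 := key 0
    have e1 : g 0 * b1 + g 1 * b2 + g 2 * b3 + g 3 * b3 + g 4 * b4 + g 5 * b4 = 0 := key 1
    have e2 : g 0 * c1 + g 1 * c2 + g 2 * c3 + g 3 * c3 + g 4 * c4 + g 5 * c4 = 0 := key 2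
    have e3 : g 0 * (a1*x1) + g 1 * (a2*x2) + g 2 * (a3*x1) + g 3 * (a3*x3)
        + g 4 * (a4*x2) + g 5 * (a4*x3) = 0 := key 3
    have e4 : g 0 * (b1*x1) + g 1 * (b2*x2) + g 2 * (b3*x1) + g 3 * (b3*x3)
        + g 4 * (b4*x2) + g 5 * (b4*x3) = 0 := key 4
    have e5 : g 0 * (c1*x1) + g 1 * (c2*x2) + g 2 * (c3*x1) + g 3 * (c3*x3)
        + g 4 * (c4*x2) + g 5 * (c4*x3) = 0 := key 5
    have H234 := Fintype.linearIndependent_iff.mp h234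
      ![g 1 * (x2 - x1), g 3 * (x3 - x1), g 4 * (x2 - x1) + g 5 * (x3 - x1)]
      (by
        funext j
        fin_cases j <;>
          simp [Fin.sum_univ_three] <;>
          [linear_combination e3 - x1 * e0; linear_combination e4 - x1 * e1;
           linear_combination e5 - x1 * e2])
    have H134 := Fintype.linearIndependent_iff.mp h134
      ![g 0 * (x1 - x2), g 2 * (x1 - x2) + g 3 * (x3 - x2), g 5 * (x3 - x2)]
      (by
        funext j
        fin_cases j <;>
          simp [Fin.sum_univ_three] <;>
          [linear_combination e3 - x2 * e0; linear_combination e4 - x2 * e1;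
           linear_combination e5 - x2 * e2])
    have k0 : g 1 * (x2 - x1) = 0 := H234 0
    have k1 : g 3 * (x3 - x1) = 0 := H234 1
    have k2 : g 4 * (x2 - x1) + g 5 * (x3 - x1) = 0 := H234 2
    have m0 : g 0 * (x1 - x2) = 0 := H134 0
    have m1 : g 2 * (x1 - x2) + g 3 * (x3 - x2) = 0 := H134 1
    have m2 : g 5 * (x3 - x2) = 0 := H134 2
    have hx12' : x1 - x2 ≠ 0 := sub_ne_zero.mpr hx12
    have hx21' : x2 - x1 ≠ 0 := sub_ne_zero.mpr (Ne.symm hx12)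
    have hx31' : x3 - x1 ≠ 0 := sub_ne_zero.mpr (Ne.symm hx13)
    have hx32' : x3 - x2 ≠ 0 := sub_ne_zero.mpr (Ne.symm hx23)
    have hg1 : g 1 = 0 := by rcases mul_eq_zero.mp k0 with h | h; exact h; exact absurd h hx21'
    have hg3 : g 3 = 0 := by rcases mul_eq_zero.mp k1 with h | h; exact h; exact absurd h hx31'
    have hg0 : g 0 = 0 := by rcases mul_eq_zero.mp m0 with h | h; exact h; exact absurd h hx12'
    have hg5 : g 5 = 0 := by rcases mul_eq_zero.mp m2 with h | h; exact h; exact absurd h hx32'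
    have hg2 : g 2 = 0 := by
      have hz : g 2 * (x1 - x2) = 0 := by rw [hg3] at m1; linarith
      rcases mul_eq_zero.mp hz with h | h; exact h; exact absurd h hx12'
    have hg4 : g 4 = 0 := by
      have hz : g 4 * (x2 - x1) = 0 := by rw [hg5] at k2; linarith
      rcases mul_eq_zero.mp hz with h | h; exact h; exact absurd h hx21'
    fin_cases i <;> assumption
  refine ⟨hLI, ?_⟩
  have := hLI.rank_matrix
  simpa using this
end

section
/- For i = 1, …, 6 let n̄_i ∈ ℝ³, x̄_i, z̄_i, d̄_i ∈ ℝ. Let N be the 6×3 matrix with i-th row n̄_iᵀ, N_x the 6×3 matrix with i-th row x̄_i·n̄_iᵀ, N_z the 6×3 matrix with i-th row z̄_i·n̄_iᵀ, and D ∈ ℝ⁶ the vector with entries d̄_i. Set N_o = Nᵀ·N, N_α = Nᵀ·N_x, N_γ = Nᵀ·N_z, D_n = Nᵀ·D, and assume N_o is invertible. Define G_x = N_x − N·N_o⁻¹·N_α, G_z = N_z − N·N_o⁻¹·N_γ, and G_d = D − N·N_o⁻¹·D_n. Suppose the vectors r1, r3, t ∈ ℝ³ satisfy the six exact constraints ⟪n̄_i,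 x̄_i·r1 + z̄_i·r3 + t⟫ = d̄_i for all i = 1, …, 6. Then (i) t = N_o⁻¹ (D_n − N_α·r1 − N_γ·r3), and (ii) G_x·r1 + G_z·r3 = G_d. -/
open Matrix

/-- Elimination of the translation from the six point-to-plane constraints
(the paper's equations (13) and (15)). -/
theorem stmt_6 (nbar : Fin 6 → (Fin 3 → ℝ)) (xbar zbar dbar : Fin 6 → ℝ)
    (r1 r3 t : Fin 3 → ℝ)
    (hconstraints : ∀ i, nbar i ⬝ᵥ (xbar i • r1 + zbar i • r3 + t) = dbar i) :
    let N : Matrix (Fin 6) (Fin 3) ℝ := Matrix.of fun i j => nbar i j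
    let Nx : Matrix (Fin 6) (Fin 3) ℝ := Matrix.of fun i j => xbar i * nbar i j
    let Nz : Matrix (Fin 6) (Fin 3) ℝ := Matrix.of fun i j => zbar i * nbar i j
    let No : Matrix (Fin 3) (Fin 3) ℝ := Nᵀ * N
    let Nα : Matrix (Fin 3) (Fin 3) ℝ := Nᵀ * Nx
    let Nγ : Matrix (Fin 3) (Fin 3) ℝ := Nᵀ * Nz
    let Dn : Fin 3 → ℝ := Nᵀ *ᵥ dbar
    let Gx : Matrix (Fin 6) (Fin 3) ℝ := Nx - N * No⁻¹ * Nα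
    let Gz : Matrix (Fin 6) (Fin 3) ℝ := Nz - N * No⁻¹ * Nγ
    let Gd : Fin 6 → ℝ := dbar - N *ᵥ (No⁻¹ *ᵥ Dn)
    IsUnit No →
      t = No⁻¹ *ᵥ (Dn - Nα *ᵥ r1 - Nγ *ᵥ r3) ∧ Gx *ᵥ r1 + Gz *ᵥ r3 = Gd := by
  intro N Nx Nz No Nα Nγ Dn Gx Gz Gd hNo
  have hinv : No⁻¹ * No = 1 :=
    Matrix.nonsing_inv_mul No ((Matrix.isUnit_iff_isUnit_det No).mp hNo)
  have hNot : ∀ v : Fin 3 → ℝ, No⁻¹ *ᵥ (No *ᵥ v) = v := by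
    intro v; rw [Matrix.mulVec_mulVec, hinv, Matrix.one_mulVec]
  have key : Nx *ᵥ r1 + Nz *ᵥ r3 + N *ᵥ t = dbar := by
    funext i
    have h := hconstraints i
    simp only [dotProduct, Pi.add_apply, Pi.smul_apply, smul_eq_mul] at h
    simp only [Nx, Nz, N, Pi.add_apply, Matrix.mulVec, dotProduct, Matrix.of_apply, ← h,
      mul_add, Finset.sum_add_distrib, Fin.sum_univ_three]
    ring
  have key2 : Nα *ᵥ r1 + Nγ *ᵥ r3 + No *ᵥ t = Dn := by
    have := congrArg (fun v => Nᵀ *ᵥ v) key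
    simpa only [Matrix.mulVec_add, Matrix.mulVec_mulVec] using this
  have hαγ : Nα *ᵥ r1 + Nγ *ᵥ r3 = Dn - No *ᵥ t := by rw [← key2]; abel
  have ht : t = No⁻¹ *ᵥ (Dn - Nα *ᵥ r1 - Nγ *ᵥ r3) := by
    have : Dn - Nα *ᵥ r1 - Nγ *ᵥ r3 = No *ᵥ t := by rw [← key2]; abel
    rw [this, hNot]
  refine ⟨ht, ?_⟩
  have h5 : No⁻¹ *ᵥ (Nα *ᵥ r1 + Nγ *ᵥ r3) = No⁻¹ *ᵥ Dn - t := by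
    rw [hαγ, Matrix.mulVec_sub, hNot]
  calc Gx *ᵥ r1 + Gz *ᵥ r3
      = (Nx *ᵥ r1 + Nz *ᵥ r3) - N *ᵥ (No⁻¹ *ᵥ (Nα *ᵥ r1 + Nγ *ᵥ r3)) := by
        show (Nx - N * No⁻¹ * Nα) *ᵥ r1 + (Nz - N * No⁻¹ * Nγ) *ᵥ r3 = _
        simp only [Matrix.sub_mulVec, Matrix.mulVec_add, ← Matrix.mulVec_mulVec]
        abel
    _ = (Nx *ᵥ r1 + Nz *ᵥ r3) - (N *ᵥ (No⁻¹ *ᵥ Dn) - N *ᵥ t) := by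
        rw [h5, Matrix.mulVec_sub]
    _ = Gd := by
        show _ = dbar - N *ᵥ (No⁻¹ *ᵥ Dn)
        rw [← key]; abel
end

section
/- Let n1, n2, n3, n4 ∈ ℝ³ be vectors such that every 3-element subset of {n1, n2, n3, n4} is linearly independent, and let x1, x2, x3 ∈ ℝ be pairwise distinct. Define the re-indexed pairs (n̄_1, x̄_1) = (n1, x1), (n̄_2, x̄_2) = (n2, x2), (n̄_3, x̄_3) = (n3, x1), (n̄_4, x̄_4) = (n3, x3), (n̄_5, x̄_5) = (n4, x2), (n̄_6, x̄_6) = (n4, x3). Let N be the 6×3 matrix with i-th row n̄_iᵀ and N_x the 6×3 matrix with i-th row x̄_i·n̄_iᵀ, and set N_o = Nᵀ·N and G_x = N_x − N·N_o⁻¹·Nᵀ·N_x. Then the 3×3 matrix G_xᵀ·G_x is invertible (equivalently, G_x has rank 3). -/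
open Matrix

lemma aux_perp (a b c : Fin 3 → ℝ) (h : LinearIndependent ℝ ![a, b, c])
    (v : Fin 3 → ℝ) (ha : a ⬝ᵥ v = 0) (hb : b ⬝ᵥ v = 0) (hc : c ⬝ᵥ v = 0) :
    v = 0 := by
  have hM : IsUnit (Matrix.of ![a, b, c]) := by
    rw [← Matrix.linearIndependent_rows_iff_isUnit]
    exact h
  have hv : (Matrix.of ![a, b, c]) *ᵥ v = (Matrix.of ![a, b, c]) *ᵥ 0 := by
    rw [Matrix.mulVec_zero]
    funext i
    simp only [dotProduct, Fin.sum_univ_three] at ha hb hc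
    fin_cases i <;> simpa [Matrix.mulVec, dotProduct, Fin.sum_univ_three]
  exact Matrix.mulVec_injective_iff_isUnit.mpr hM hv

/-- STEP 2 of the analytical solution: the matrix `G_xᵀ·G_x` obtained after eliminating
the translation is invertible (equivalently `G_x` has full column rank 3). -/
theorem stmt_7 (n1 n2 n3 n4 : Fin 3 → ℝ) (x1 x2 x3 : ℝ)
    (h123 : LinearIndependent ℝ ![n1, n2, n3])
    (h124 : LinearIndependent ℝ ![n1, n2, n4])
    (h134 : LinearIndependent ℝ ![n1, n3, n4])
    (h234 : LinearIndependent ℝ ![n2, n3, n4])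
    (hx12 : x1 ≠ x2) (hx13 : x1 ≠ x3) (hx23 : x2 ≠ x3) :
    let nbar : Fin 6 → (Fin 3 → ℝ) := ![n1, n2, n3, n3, n4, n4]
    let xbar : Fin 6 → ℝ := ![x1, x2, x1, x3, x2, x3]
    let N : Matrix (Fin 6) (Fin 3) ℝ := Matrix.of fun i j => nbar i j
    let Nx : Matrix (Fin 6) (Fin 3) ℝ := Matrix.of fun i j => xbar i * nbar i j
    let No : Matrix (Fin 3) (Fin 3) ℝ := Nᵀ * N
    let Gx : Matrix (Fin 6) (Fin 3) ℝ := Nx - N * No⁻¹ * (Nᵀ * Nx)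
    IsUnit (Gxᵀ * Gx) := by
  intro nbar xbar N Nx No Gx
  rw [Matrix.isUnit_iff_isUnit_det, isUnit_iff_ne_zero, Ne,
    ← Matrix.exists_mulVec_eq_zero_iff]
  rintro ⟨v, hv, hGv⟩
  apply hv
  have hG : Gx *ᵥ v = 0 := by
    have h1 : (Gx *ᵥ v) ⬝ᵥ (Gx *ᵥ v) = 0 := by
      have h2 : v ⬝ᵥ ((Gxᵀ * Gx) *ᵥ v) = 0 := by rw [hGv, dotProduct_zero]
      rwa [← Matrix.mulVec_mulVec, Matrix.dotProduct_mulVec, Matrix.vecMul_transpose] at h2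
    exact dotProduct_self_eq_zero.mp h1
  set w : Fin 3 → ℝ := (No⁻¹ * (Nᵀ * Nx)) *ᵥ v with hw
  have h3 : Nx *ᵥ v = N *ᵥ w := by
    have h4 : Nx *ᵥ v - (N * No⁻¹ * (Nᵀ * Nx)) *ᵥ v = 0 := by
      rw [← Matrix.sub_mulVec]; exact hG
    have h5 : (N * No⁻¹ * (Nᵀ * Nx)) *ᵥ v = N *ᵥ w := by
      rw [hw, Matrix.mulVec_mulVec, Matrix.mul_assoc]
    rw [h5] at h4
    exact sub_eq_zero.mp h4
  have hkey : ∀ i : Fin 6, xbar i * (nbar i ⬝ᵥ v) = nbar i ⬝ᵥ w := by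
    intro i
    have h6 := congrFun h3 i
    simpa [Nx, N, Matrix.mulVec, dotProduct, Finset.mul_sum, mul_assoc] using h6
  have e0 : x1 * (n1 ⬝ᵥ v) = n1 ⬝ᵥ w := hkey 0
  have e1 : x2 * (n2 ⬝ᵥ v) = n2 ⬝ᵥ w := hkey 1
  have e2 : x1 * (n3 ⬝ᵥ v) = n3 ⬝ᵥ w := hkey 2
  have e3 : x3 * (n3 ⬝ᵥ v) = n3 ⬝ᵥ w := hkey 3
  have e4 : x2 * (n4 ⬝ᵥ v) = n4 ⬝ᵥ w := hkey 4
  have e5 : x3 * (n4 ⬝ᵥ v) = n4 ⬝ᵥ w := hkey 5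
  -- e2 : x1 * (n3 ⬝ᵥ v) = n3 ⬝ᵥ w, e3 : x3 * (n3 ⬝ᵥ v) = n3 ⬝ᵥ w
  have hn3v : n3 ⬝ᵥ v = 0 := by
    have : (x1 - x3) * (n3 ⬝ᵥ v) = 0 := by linarith
    rcases mul_eq_zero.mp this with h | h
    · exact absurd (sub_eq_zero.mp h) hx13
    · exact h
  have hn4v : n4 ⬝ᵥ v = 0 := by
    have : (x2 - x3) * (n4 ⬝ᵥ v) = 0 := by linarith
    rcases mul_eq_zero.mp this with h | h
    · exact absurd (sub_eq_zero.mp h) hx23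
    · exact h
  have hn3w : n3 ⬝ᵥ w = 0 := by rw [← e2, hn3v, mul_zero]
  have hn4w : n4 ⬝ᵥ w = 0 := by rw [← e4, hn4v, mul_zero]
  have hw1 : w - x1 • v = 0 := by
    apply aux_perp n1 n3 n4 h134
    · rw [dotProduct_sub, dotProduct_smul, smul_eq_mul, ← e0, sub_self]
    · rw [dotProduct_sub, dotProduct_smul, smul_eq_mul, hn3w, hn3v, mul_zero, sub_zero]
    · rw [dotProduct_sub, dotProduct_smul, smul_eq_mul, hn4w, hn4v, mul_zero, sub_zero]
  have hw2 : w - x2 • v = 0 := by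
    apply aux_perp n2 n3 n4 h234
    · rw [dotProduct_sub, dotProduct_smul, smul_eq_mul, ← e1, sub_self]
    · rw [dotProduct_sub, dotProduct_smul, smul_eq_mul, hn3w, hn3v, mul_zero, sub_zero]
    · rw [dotProduct_sub, dotProduct_smul, smul_eq_mul, hn4w, hn4v, mul_zero, sub_zero]
  have hsub : (x1 - x2) • v = 0 := by
    have := sub_eq_zero.mp hw1
    have := sub_eq_zero.mp hw2
    rw [sub_smul]
    rw [← sub_eq_zero.mp hw1, ← sub_eq_zero.mp hw2, sub_self]
  rcases smul_eq_zero.mp hsub with h | h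
  · exact absurd (sub_eq_zero.mp h) hx12
  · exact h
end
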